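/- Let E be a finite-dimensional real normed vector space, U ⊆ E open, J an almost complex structure on U, and Γ the Christoffel symbols of a minimal connection for J (almost complex with torsion equal to (1/4)N_J pointwise). Let A : U → (E →L[ℝ] E →L[ℝ] E) be smooth with each A(x) symmetric (A(x)(u)(v) = A(x)(v)(u)) and complex-bilinear with respect to J(x) (A(x)(u)(J(x)v) = J(x)(A(x)(u)(v))). Then Γ + A is again a minimal connection for J, and the curvatures satisfy, for all x ∈ U and u, v, w ∈ E: (R_{Γ+A})^{--}(x)(u,v)(w) = (R_Γ)^{--}(x)(u,v)(w) + (1/4)·A(x)(N_J(u,v)(x))(w), where the (--)-component is taken in the arguments (u,v) with respect to J(x). Consequently the operator □_{u∧v}w := ∇_{N_J(u,v)}w - 4R^{--}(u,v)w is independent of the choice of minimal connection. -/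

import Mathlib

open ContinuousLinearMap

section Helpers

variable {E F G : Type*} [NormedAddCommGroup E] [NormedSpace ℝ E]
  [NormedAddCommGroup F] [NormedSpace ℝ F] [NormedAddCommGroup G] [NormedSpace ℝ G]

lemma fd_app_const {f : E → F →L[ℝ] G} {x : E} (hf : DifferentiableAt ℝ f x) (p : F) (z : E) :
    fderiv ℝ (fun y => f y p) x z = fderiv ℝ f x z p := by
  rw [fderiv_clm_apply hf (differentiableAt_const p)]
  simp

end Helpers

section KeyAlg

variable {E : Type*} [NormedAddCommGroup E] [NormedSpace ℝ E]

lemma key_alg (j : E →L[ℝ] E) (g a dJ : E →L[ℝ] E →L[ℝ] E)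
    (da : E →L[ℝ] E →L[ℝ] E →L[ℝ] E)
    (hj : ∀ z, j (j z) = -z)
    (hJ : ∀ z y, dJ z y = j (g z y) - g z (j y))
    (ha : ∀ z y, a z y = a y z)
    (hc : ∀ z y, a z (j y) = j (a z y))
    (h5 : ∀ z p q, da z p (j q) + a p (dJ z q) = dJ z (a p q) + j (da z p q))
    (h6 : ∀ z p q, da z p q = da z q p)
    (u v w : E) :
    (da u v w - da v u w + g u (a v w) + a u (g v w) - g v (a u w) - a v (g u w)
        + a u (a v w) - a v (a u w))
      + j (da (j u) v w - da v (j u) w + g (j u) (a v w) + a (j u) (g v w)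
            - g v (a (j u) w) - a v (g (j u) w) + a (j u) (a v w) - a v (a (j u) w))
      + j (da u (j v) w - da (j v) u w + g u (a (j v) w) + a u (g (j v) w)
            - g (j v) (a u w) - a (j v) (g u w) + a u (a (j v) w) - a (j v) (a u w))
      - (da (j u) (j v) w - da (j v) (j u) w + g (j u) (a (j v) w) + a (j u) (g (j v) w)
            - g (j v) (a (j u) w) - a (j v) (g (j u) w) + a (j u) (a (j v) w)
            - a (j v) (a (j u) w))
      = a (dJ (j u) v - dJ (j v) u + j (dJ v u) - j (dJ u v)) w := by
  have hac' : ∀ z y, a (j z) y = j (a z y) := fun z y => by rw [ha, hc, ha]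
  have e1 : da v (j u) w = dJ v (a w u) + j (da v u w) - a w (dJ v u) := by
    have h := h5 v w u
    rw [h6 v w u] at h
    rw [h6 v (j u) w]
    exact eq_sub_of_add_eq h
  have e2 : da u (j v) w = dJ u (a w v) + j (da u v w) - a w (dJ u v) := by
    have h := h5 u w v
    rw [h6 u w v] at h
    rw [h6 u (j v) w]
    exact eq_sub_of_add_eq h
  have e3 : da (j u) (j v) w = dJ (j u) (a w v) + j (da (j u) v w) - a w (dJ (j u) v) := by
    have h := h5 (j u) w v
    rw [h6 (j u) w v] at h
    rw [h6 (j u) (j v) w]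
    exact eq_sub_of_add_eq h
  have e4 : da (j v) (j u) w = dJ (j v) (a w u) + j (da (j v) u w) - a w (dJ (j v) u) := by
    have h := h5 (j v) w u
    rw [h6 (j v) w u] at h
    rw [h6 (j v) (j u) w]
    exact eq_sub_of_add_eq h
  rw [e1, e2, e3, e4]
  have haw : ∀ y, a y w = a w y := fun y => ha y w
  simp only [hJ, map_sub, map_add, map_neg, sub_apply, add_apply, neg_apply, hc, hac', hj]
  simp only [haw]
  abel

end KeyAlg
noncomputable def lieB {G : Type*} [NormedAddCommGroup G] [NormedSpace ℝ G]
    (X Y : G → G) : G → G :=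
  fun p => fderiv ℝ Y p (X p) - fderiv ℝ X p (Y p)

/-- The Nijenhuis tensor `N_J(X,Y) = [JX,JY] - J[JX,Y] - J[X,JY] - [X,Y]`. -/
noncomputable def nijenhuis {G : Type*} [NormedAddCommGroup G] [NormedSpace ℝ G]
    (J : G → G →L[ℝ] G) (X Y : G → G) : G → G :=
  fun p =>
    lieB (fun q => J q (X q)) (fun q => J q (Y q)) p
      - J p (lieB (fun q => J q (X q)) Y p)
      - J p (lieB X (fun q => J q (Y q)) p)
      - lieB X Y p

/-- The curvature of a connection with Christoffel symbols `Γ`: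
`R(x)(u,v)(w) = (D_uΓ)(x)(v)(w) - (D_vΓ)(x)(u)(w) + Γ(x)(u)(Γ(x)(v)(w)) - Γ(x)(v)(Γ(x)(u)(w))`. -/
noncomputable def curvature {E : Type*} [NormedAddCommGroup E] [NormedSpace ℝ E]
    (Γ : E → E →L[ℝ] E →L[ℝ] E) : E → E → E → E → E :=
  fun x u v w =>
    fderiv ℝ Γ x u v w - fderiv ℝ Γ x v u w + Γ x u (Γ x v w) - Γ x v (Γ x u w)

/-- The totally `J`-antilinear part `R^{--}` of the curvature in its first two
arguments `(u,v)`. -/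
noncomputable def curvMM {E : Type*} [NormedAddCommGroup E] [NormedSpace ℝ E]
    (J : E → E →L[ℝ] E) (Γ : E → E →L[ℝ] E →L[ℝ] E) : E → E → E → E → E :=
  fun x u v w =>
    (1/4 : ℝ) • (curvature Γ x u v w + J x (curvature Γ x (J x u) v w)
      + J x (curvature Γ x u (J x v) w) - curvature Γ x (J x u) (J x v) w)

set_option maxHeartbeats 1000000

/-- Last parts of Theorem A.1 and Propositions A.2–A.3 of the paper: gauging a minimal
connection `Γ` by a symmetric complex-bilinear `A` yields again a minimal connection,
the `(--)`-curvatures satisfy `R_{Γ+A}^{--} = R_Γ^{--} + (1/4)·A(N_J(·,·))(·)`, and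
consequently the operator `□_{u∧v}w = ∇_{N_J(u,v)}w - 4R^{--}(u,v)w` does not depend on
the choice of minimal connection. -/
theorem minimal_connection_gauge_curvature
    {E : Type*} [NormedAddCommGroup E] [NormedSpace ℝ E] [FiniteDimensional ℝ E]
    (U : Set E) (hU : IsOpen U)
    (J : E → E →L[ℝ] E)
    (hJs : ContDiffOn ℝ (⊤ : ℕ∞) J U)
    (hJ2 : ∀ x ∈ U, (J x).comp (J x) = -ContinuousLinearMap.id ℝ E)
    (Γ A : E → E →L[ℝ] E →L[ℝ] E)
    (hΓs : ContDiffOn ℝ (⊤ : ℕ∞) Γ U) (hAs : ContDiffOn ℝ (⊤ : ℕ∞) A U)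
    (hac : ∀ x ∈ U, ∀ u v : E,
      fderiv ℝ J x u v + Γ x u (J x v) - J x (Γ x u v) = 0)
    (hmin : ∀ x ∈ U, ∀ u v : E,
      Γ x u v - Γ x v u = (1/4 : ℝ) • nijenhuis J (fun _ => u) (fun _ => v) x)
    (hAsymm : ∀ x ∈ U, ∀ u v : E, A x u v = A x v u)
    (hAc : ∀ x ∈ U, ∀ u v : E, A x u (J x v) = J x (A x u v)) :
    (∀ x ∈ U, ∀ u v : E,
      fderiv ℝ J x u v + (Γ x + A x) u (J x v) - J x ((Γ x + A x) u v) = 0) ∧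
    (∀ x ∈ U, ∀ u v : E,
      (Γ x + A x) u v - (Γ x + A x) v u
        = (1/4 : ℝ) • nijenhuis J (fun _ => u) (fun _ => v) x) ∧
    (∀ x ∈ U, ∀ u v w : E,
      curvMM J (fun y => Γ y + A y) x u v w
        = curvMM J Γ x u v w
          + (1/4 : ℝ) • A x (nijenhuis J (fun _ => u) (fun _ => v) x) w) ∧
    (∀ x ∈ U, ∀ u v w : E,
      (Γ x + A x) (nijenhuis J (fun _ => u) (fun _ => v) x) w
          - (4 : ℝ) • curvMM J (fun y => Γ y + A y) x u v w
        = Γ x (nijenhuis J (fun _ => u) (fun _ => v) x) w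
          - (4 : ℝ) • curvMM J Γ x u v w) := by
  have main : ∀ x ∈ U, ∀ u v w : E,
      curvMM J (fun y => Γ y + A y) x u v w
        = curvMM J Γ x u v w
          + (1/4 : ℝ) • A x (nijenhuis J (fun _ => u) (fun _ => v) x) w := by
    intro x hx u v w
    have hmem : U ∈ nhds x := hU.mem_nhds hx
    have hJd : DifferentiableAt ℝ J x := (hJs.contDiffAt hmem).differentiableAt (by simp)
    have hΓd : DifferentiableAt ℝ Γ x := (hΓs.contDiffAt hmem).differentiableAt (by simp)
    have hAd : DifferentiableAt ℝ A x := (hAs.contDiffAt hmem).differentiableAt (by simp)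
    have h1 : ∀ z, J x (J x z) = -z := fun z => by
      have h := congrArg (fun (L : E →L[ℝ] E) => L z) (hJ2 x hx)
      simpa using h
    have h2 : ∀ z y, fderiv ℝ J x z y = J x (Γ x z y) - Γ x z (J x y) := fun z y => by
      have h := hac x hx z y
      linear_combination (norm := module) h
    have dAp : ∀ p : E, DifferentiableAt ℝ (fun y => A y p) x :=
      fun p => hAd.clm_apply (differentiableAt_const p)
    have dJp : ∀ p : E, DifferentiableAt ℝ (fun y => J y p) x :=
      fun p => hJd.clm_apply (differentiableAt_const p)
    have dApq : ∀ p q : E, DifferentiableAt ℝ (fun y => A y p q) x :=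
      fun p q => (dAp p).clm_apply (differentiableAt_const q)
    have fA1 : ∀ p z : E, fderiv ℝ (fun y => A y p) x z = fderiv ℝ A x z p :=
      fun p z => fd_app_const hAd p z
    have fApq : ∀ p q z : E, fderiv ℝ (fun y => A y p q) x z = fderiv ℝ A x z p q := by
      intro p q z
      have h' := fd_app_const (f := fun y => A y p) (dAp p) q z
      simpa [fA1 p] using h'
    have H5 : ∀ z p q : E, fderiv ℝ A x z p (J x q) + A x p (fderiv ℝ J x z q)
        = fderiv ℝ J x z (A x p q) + J x (fderiv ℝ A x z p q) := by
      intro z p q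
      have heq : fderiv ℝ (fun y => A y p (J y q)) x = fderiv ℝ (fun y => J y (A y p q)) x :=
        Filter.EventuallyEq.fderiv_eq
          (Filter.eventuallyEq_of_mem hmem (fun y hy => hAc y hy p q))
      have hl : fderiv ℝ (fun y => A y p (J y q)) x
          = (A x p).comp (fderiv ℝ (fun y => J y q) x)
            + (fderiv ℝ (fun y => A y p) x).flip (J x q) :=
        fderiv_clm_apply (dAp p) (dJp q)
      have hr : fderiv ℝ (fun y => J y (A y p q)) x
          = (J x).comp (fderiv ℝ (fun y => A y p q) x)
            + (fderiv ℝ J x).flip (A x p q) :=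
        fderiv_clm_apply hJd (dApq p q)
      have happ := congrArg (fun (L : E →L[ℝ] E) => L z) heq
      rw [hl, hr] at happ
      simp only [add_apply, coe_comp', Function.comp_apply, flip_apply] at happ
      rw [fd_app_const hJd q z, fA1 p z, fApq p q z] at happ
      linear_combination (norm := module) happ
    have H6 : ∀ z p q : E, fderiv ℝ A x z p q = fderiv ℝ A x z q p := by
      intro z p q
      have heq : fderiv ℝ (fun y => A y p q) x = fderiv ℝ (fun y => A y q p) x :=
        Filter.EventuallyEq.fderiv_eq
          (Filter.eventuallyEq_of_mem hmem (fun y hy => hAsymm y hy p q))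
      have happ := congrArg (fun (L : E →L[ℝ] E) => L z) heq
      rwa [fApq p q z, fApq q p z] at happ
    have hNij : nijenhuis J (fun _ => u) (fun _ => v) x
        = fderiv ℝ J x (J x u) v - fderiv ℝ J x (J x v) u
          + J x (fderiv ℝ J x v u) - J x (fderiv ℝ J x u v) := by
      simp only [nijenhuis, lieB, fderiv_const_apply, ContinuousLinearMap.zero_apply,
        fd_app_const hJd]
      simp only [map_sub, map_zero, zero_sub, sub_zero, map_neg]
      abel
    have hΓ'd : fderiv ℝ (fun y => Γ y + A y) x = fderiv ℝ Γ x + fderiv ℝ A x :=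
      by have := fderiv_fun_add (𝕜 := ℝ) (x := x) (f := Γ) (g := A) hΓd hAd; exact this
    have hcurv : ∀ p q : E, curvature (fun y => Γ y + A y) x p q w
        = curvature Γ x p q w
          + (fderiv ℝ A x p q w - fderiv ℝ A x q p w + Γ x p (A x q w) + A x p (Γ x q w)
              - Γ x q (A x p w) - A x q (Γ x p w) + A x p (A x q w) - A x q (A x p w)) := by
      intro p q
      simp only [curvature, hΓ'd, ContinuousLinearMap.add_apply, map_add]
      abel
    have hkey := key_alg (J x) (Γ x) (A x) (fderiv ℝ J x) (fderiv ℝ A x)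
      h1 h2 (hAsymm x hx) (hAc x hx) H5 H6 u v w
    rw [hNij]
    simp only [curvMM, hcurv]
    simp only [map_add, map_sub, ContinuousLinearMap.add_apply,
      ContinuousLinearMap.sub_apply] at hkey ⊢
    rw [← smul_add]
    congr 1
    linear_combination (norm := abel) hkey
  refine ⟨?_, ?_, main, ?_⟩
  · intro x hx u v
    have h := hac x hx u v
    have h2 := hAc x hx u v
    simp only [ContinuousLinearMap.add_apply, map_add]
    linear_combination (norm := module) h + h2
  · intro x hx u v
    have h := hmin x hx u v
    have hs := hAsymm x hx u v
    simp only [ContinuousLinearMap.add_apply]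
    linear_combination (norm := module) h + hs
  · intro x hx u v w
    have h3 := main x hx u v w
    rw [h3]
    simp only [ContinuousLinearMap.add_apply]
    module
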